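/- Fix a ∈ (0,1), a step size η > 2, and x_0 ≠ 0. Let f_+(x) = x²/2 + x⁴/4 and f_a(x) = a·x²/2. Define the random iterates x_{t+1} = x_t − η·f'_{ξ_t}(x_t), where ξ_0, ξ_1, … are i.i.d. and each ξ_t selects f_+ or f_a with probability 1/2 each. Then E[|x_t|] → ∞ as t → ∞ (here x* = 0 is the common minimizer of f_+ and f_a). -/

import Mathlib

open MeasureTheory ProbabilityTheory Filter

lemma stmt3_d1 (z : ℝ) : deriv (fun y : ℝ => y ^ 2 / 2 + y ^ 4 / 4) z = z + z ^ 3 := by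
  have h1 : DifferentiableAt ℝ (fun y : ℝ => y ^ 2 / 2) z := by fun_prop
  have h2 : DifferentiableAt ℝ (fun y : ℝ => y ^ 4 / 4) z := by fun_prop
  rw [deriv_fun_add h1 h2, deriv_div_const, deriv_div_const, deriv_pow_field, deriv_pow_field]
  ring

lemma stmt3_d2 (a z : ℝ) : deriv (fun y : ℝ => a * y ^ 2 / 2) z = a * z := by
  simp [mul_div_assoc, deriv_const_mul, deriv_div_const, deriv_pow]

theorem stmt3 {Ω : Type*} [MeasurableSpace Ω] (μ : Measure Ω) [IsProbabilityMeasure μ]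
    (a : ℝ) (ha0 : 0 < a) (ha1 : a < 1) (η : ℝ) (hη : 2 < η) (x0 : ℝ) (hx0 : x0 ≠ 0)
    (ξ : ℕ → Ω → Bool) (hmeas : ∀ t, Measurable (ξ t))
    (hindep : iIndepFun ξ μ)
    (hdist : ∀ t, μ {ω | ξ t ω = true} = 1 / 2)
    (x : ℕ → Ω → ℝ) (hinit : ∀ ω, x 0 ω = x0)
    (hstep : ∀ t ω, x (t + 1) ω = x t ω -
      η * deriv (if ξ t ω then fun y : ℝ => y ^ 2 / 2 + y ^ 4 / 4
                 else fun y : ℝ => a * y ^ 2 / 2) (x t ω)) :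
    Tendsto (fun t : ℕ => ∫ ω, |x t ω - 0| ∂μ) atTop atTop := by
  have hη0 : (0:ℝ) < η := by linarith
  -- the recursion, rewritten explicitly
  have hstep' : ∀ t ω, x (t + 1) ω =
      if ξ t ω then x t ω - η * (x t ω + x t ω ^ 3) else x t ω - η * (a * x t ω) := by
    intro t ω
    rw [hstep t ω]
    cases hb : ξ t ω
    · simp only [hb, Bool.false_eq_true, if_false, stmt3_d2]
    · simp only [hb, if_true, stmt3_d1]
  -- deterministic iterate on the all-true event
  set g : ℝ → ℝ := fun z => z - η * (z + z ^ 3) with hg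
  set y : ℕ → ℝ := fun t => g^[t] x0 with hy
  have hy0 : y 0 = x0 := rfl
  have hysucc : ∀ t, y (t + 1) = g (y t) := by
    intro t; simp only [hy, Function.iterate_succ_apply']
  -- growth of |y|
  have hgabs : ∀ z : ℝ, |g z| = |z| * (η * (1 + z ^ 2) - 1) := by
    intro z
    have h1 : g z = -(z * (η * (1 + z ^ 2) - 1)) := by simp only [hg]; ring
    rw [h1, abs_neg, abs_mul]
    congr 1
    have : (0:ℝ) ≤ η * (1 + z ^ 2) - 1 := by nlinarith [sq_nonneg z]
    exact abs_of_nonneg this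
  have hgrow : ∀ z : ℝ, (η - 1) * |z| ≤ |g z| := by
    intro z; rw [hgabs]
    nlinarith [abs_nonneg z, sq_nonneg z,
      mul_nonneg (mul_nonneg hη0.le (abs_nonneg z)) (sq_nonneg z)]
  have hgrow2 : ∀ z : ℝ, 2 ≤ |z| → 4 * |z| ≤ |g z| := by
    intro z hz; rw [hgabs]
    have h2 : (4:ℝ) ≤ z ^ 2 := by
      have := sq_abs z; nlinarith
    have h3 : (4:ℝ) ≤ η * (1 + z ^ 2) - 1 := by
      nlinarith [mul_le_mul_of_nonneg_left h2 hη0.le]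
    calc 4 * |z| ≤ (η * (1 + z ^ 2) - 1) * |z| :=
          mul_le_mul_of_nonneg_right h3 (abs_nonneg z)
      _ = |z| * (η * (1 + z ^ 2) - 1) := mul_comm _ _
  -- |y t| ≥ (η-1)^t |x0|
  have hylb : ∀ t, (η - 1) ^ t * |x0| ≤ |y t| := by
    intro t
    induction t with
    | zero => simp [hy0]
    | succ t ih =>
      rw [hysucc]
      calc (η - 1) ^ (t+1) * |x0| = (η - 1) * ((η - 1) ^ t * |x0|) := by ring
        _ ≤ (η - 1) * |y t| := by
            apply mul_le_mul_of_nonneg_left ih; linarith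
        _ ≤ |g (y t)| := hgrow _
  -- find T with |y T| ≥ 2
  have hx0' : 0 < |x0| := abs_pos.mpr hx0
  obtain ⟨T, hT⟩ : ∃ T, 2 ≤ (η - 1) ^ T * |x0| := by
    have h1 : Tendsto (fun t : ℕ => (η - 1) ^ t * |x0|) atTop atTop :=
      (tendsto_pow_atTop_atTop_of_one_lt (by linarith)).atTop_mul_const hx0'
    exact (h1.eventually_ge_atTop 2).exists
  have hyT : 2 ≤ |y T| := le_trans hT (hylb T)
  -- doubling phase
  have hyfast : ∀ s, 2 * 4 ^ s ≤ |y (T + s)| := by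
    intro s
    induction s with
    | zero => simpa using hyT
    | succ s ih =>
      have hp : (1:ℝ) ≤ 4 ^ s := one_le_pow₀ (by norm_num)
      have h2 : (2:ℝ) ≤ |y (T + s)| := by nlinarith
      calc (2:ℝ) * 4 ^ (s+1) = 4 * (2 * 4 ^ s) := by ring
        _ ≤ 4 * |y (T + s)| := by nlinarith
        _ ≤ |g (y (T + s))| := hgrow2 _ h2
        _ = |y (T + (s+1))| := by
            rw [show T + (s+1) = (T + s) + 1 from rfl, hysucc]
  -- measurability of x t
  have hxmeas : ∀ t, Measurable (x t) := by
    intro t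
    induction t with
    | zero => simpa [funext hinit] using measurable_const
    | succ t ih =>
      have : (x (t+1)) = fun ω => if ξ t ω then x t ω - η * (x t ω + x t ω ^ 3)
          else x t ω - η * (a * x t ω) := funext (hstep' t)
      rw [this]
      exact Measurable.ite ((hmeas t) (measurableSet_singleton true))
        (by fun_prop) (by fun_prop)
  -- boundedness of x t
  have hxbdd : ∀ t, ∃ B : ℝ, 0 ≤ B ∧ ∀ ω, |x t ω| ≤ B := by
    intro t
    induction t with
    | zero => exact ⟨|x0|, abs_nonneg _, fun ω => by rw [hinit]⟩
    | succ t ih =>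
      obtain ⟨B, hB0, hB⟩ := ih
      have hB3 : (0:ℝ) ≤ B ^ 3 := by positivity
      have haB : (0:ℝ) ≤ a * B := mul_nonneg ha0.le hB0
      refine ⟨B + η * (B + B ^ 3 + a * B), ?_, fun ω => ?_⟩
      · have : (0:ℝ) ≤ η * (B + B ^ 3 + a * B) :=
          mul_nonneg hη0.le (by linarith)
        linarith
      have h1 := hB ω
      have h2 : |x t ω| ^ 3 ≤ B ^ 3 := pow_le_pow_left₀ (abs_nonneg _) h1 3
      have habs3 : |x t ω ^ 3| = |x t ω| ^ 3 := abs_pow _ _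
      rw [hstep' t ω]
      cases hb : ξ t ω
      · simp only [hb, Bool.false_eq_true, if_false]
        have hsub : |x t ω - η * (a * x t ω)| ≤ |x t ω| + η * (a * |x t ω|) := by
          refine le_trans (abs_sub _ _) ?_
          rw [abs_mul, abs_of_pos hη0, abs_mul, abs_of_pos ha0]
        have h4 : a * |x t ω| ≤ a * B := mul_le_mul_of_nonneg_left h1 ha0.le
        have h5 : η * (a * |x t ω|) ≤ η * (B + B ^ 3 + a * B) :=
          mul_le_mul_of_nonneg_left (by linarith) hη0.le
        linarith
      · simp only [hb, if_true]
        have hsub : |x t ω - η * (x t ω + x t ω ^ 3)| ≤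
            |x t ω| + η * (|x t ω| + |x t ω| ^ 3) := by
          refine le_trans (abs_sub _ _) ?_
          rw [abs_mul, abs_of_pos hη0]
          gcongr
          exact le_trans (abs_add_le _ _) (by rw [habs3])
        have h5 : η * (|x t ω| + |x t ω| ^ 3) ≤ η * (B + B ^ 3 + a * B) :=
          mul_le_mul_of_nonneg_left (by linarith) hη0.le
        linarith
  -- the all-true event
  set A : ℕ → Set Ω := fun t => ⋂ s ∈ Finset.range t, ξ s ⁻¹' {true} with hA
  have hAmeas : ∀ t, MeasurableSet (A t) :=
    fun t => MeasurableSet.biInter (Set.to_countable _)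
      (fun s _ => (hmeas s) (measurableSet_singleton true))
  have hAmeasure : ∀ t, μ (A t) = (1/2 : ENNReal) ^ t := by
    intro t
    rw [hA]
    rw [hindep.meas_biInter (fun i _ => ⟨{true}, measurableSet_singleton true, rfl⟩)]
    have hpre : ∀ s : ℕ, μ (ξ s ⁻¹' {true}) = 1/2 := by
      intro s
      have : ξ s ⁻¹' {true} = {ω | ξ s ω = true} := by ext ω; simp
      rw [this, hdist]
    simp [hpre]
  -- x t is constant = y t on A t
  have hxA : ∀ t, ∀ ω ∈ A t, x t ω = y t := by
    intro t
    induction t with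
    | zero => intro ω _; rw [hinit, hy0]
    | succ t ih =>
      intro ω hω
      simp only [hA, Set.mem_iInter] at hω
      have hωA : ω ∈ A t := by
        simp only [hA, Set.mem_iInter]
        intro s hs
        exact hω s (Finset.mem_range.mpr (lt_trans (Finset.mem_range.mp hs) (Nat.lt_succ_self t)))
      have hξ : ξ t ω = true := by
        have := hω t (Finset.mem_range.mpr (Nat.lt_succ_self t))
        simpa using this
      rw [hstep' t ω, hξ, if_pos rfl, ih ω hωA, hysucc]
  -- lower bound on the integral
  have hbound : ∀ t, (1/2 : ℝ) ^ t * |y t| ≤ ∫ ω, |x t ω - 0| ∂μ := by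
    intro t
    obtain ⟨B, hB0, hB⟩ := hxbdd t
    have hint : Integrable (fun ω => |x t ω - 0|) μ := by
      apply Integrable.mono' (integrable_const B)
        ((hxmeas t).sub measurable_const).abs.aestronglyMeasurable
      filter_upwards with ω
      rw [Real.norm_eq_abs, abs_abs, Pi.sub_apply]; simp only [sub_zero]
      exact hB ω
    have h1 : ∫ ω in A t, |x t ω - 0| ∂μ ≤ ∫ ω, |x t ω - 0| ∂μ := by
      apply setIntegral_le_integral hint
      filter_upwards with ω using abs_nonneg _
    have h2 : ∫ ω in A t, |x t ω - 0| ∂μ = |y t| * ((1/2 : ℝ) ^ t) := by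
      have hcongr : ∫ ω in A t, |x t ω - 0| ∂μ = ∫ _ω in A t, |y t| ∂μ :=
        setIntegral_congr_fun (hAmeas t) (fun ω hω => by rw [sub_zero, hxA t ω hω])
      rw [hcongr, setIntegral_const, measureReal_def, hAmeasure t, smul_eq_mul, mul_comm]
      congr 1
      simp [ENNReal.toReal_pow]
    rw [mul_comm] at h2
    linarith [h1, h2.le]
  -- conclude
  apply tendsto_atTop_mono hbound
  have hC : (0:ℝ) < 2 * (1/4) ^ T := by positivity
  have hm : Tendsto (fun t : ℕ => 2 * (1/4 : ℝ) ^ T * 2 ^ t) atTop atTop :=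
    (tendsto_pow_atTop_atTop_of_one_lt (by norm_num : (1:ℝ) < 2)).const_mul_atTop hC
  apply tendsto_atTop_mono' _ _ hm
  filter_upwards [eventually_ge_atTop T] with t ht
  obtain ⟨s, rfl⟩ := Nat.exists_eq_add_of_le ht
  have h5 := hyfast s
  have heq : (2:ℝ) * (1/4) ^ T * 2 ^ (T + s) = (1/2 : ℝ) ^ (T + s) * (2 * 4 ^ s) := by
    have hA : ((1:ℝ)/2)^s * (4:ℝ)^s = 2^s := by rw [← mul_pow]; norm_num
    have hB : ((1:ℝ)/4)^T * (2:ℝ)^T = (1/2)^T := by rw [← mul_pow]; norm_num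
    rw [pow_add ((1:ℝ)/2), pow_add (2:ℝ)]
    linear_combination (2*(2:ℝ)^s) * hB - (2*((1:ℝ)/2)^T) * hA
  rw [heq]
  have hp : (0:ℝ) < (1/2 : ℝ) ^ (T + s) := by positivity
  exact mul_le_mul_of_nonneg_left h5 hp.le
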